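/- Let n be an even positive integer and φ_1, …, φ_n real numbers with cyclic indices mod n. The system α_i − φ_i = φ_i − α_{i+1} (mod 2π), i = 1,…,n, has a solution if and only if 2·Σ_{i=1}^n (−1)^i φ_i ≡ 0 (mod 2π); moreover, if a solution exists, then the full solution set is obtained from one solution by adding an arbitrary constant c to all α_i with even index and subtracting c from all α_i with odd index. -/

import Mathlib

open Real Finset

/-- `a ≡ b` modulo the real number `p`. -/
def RModEq (p a b : ℝ) : Prop := ∃ m : ℤ, a - b = m * p

private lemma neg_one_pow_congr' {a b : ℕ} (h : a % 2 = b % 2) :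
    ((-1 : ℝ)) ^ a = (-1) ^ b := by
  rcases Nat.even_or_odd a with ha | ha
  · rw [ha.neg_one_pow, (Nat.even_iff.2 (h ▸ Nat.even_iff.1 ha)).neg_one_pow]
  · rw [ha.neg_one_pow, (Nat.odd_iff.2 (h ▸ Nat.odd_iff.1 ha)).neg_one_pow]

private def gseq (n : ℕ) (φ : ZMod n → ℝ) : ℕ → ℝ
  | 0 => 0
  | k + 1 => 2 * φ (k : ZMod n) - gseq n φ k

private lemma gseq_spec (n : ℕ) (φ : ZMod n → ℝ) (k : ℕ) :
    (-1 : ℝ) ^ k * gseq n φ k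
      = -2 * ∑ j ∈ Finset.range k, (-1 : ℝ) ^ j * φ (j : ZMod n) := by
  induction k with
  | zero => simp [gseq]
  | succ k ih =>
    rw [Finset.sum_range_succ, gseq]
    linear_combination ih

theorem stmt1 (n : ℕ) (hpos : 0 < n) (hn : Even n) (φ : ZMod n → ℝ) :
    ((∃ α : ZMod n → ℝ,
        ∀ i : ZMod n, RModEq (2 * π) (α i - φ i) (φ i - α (i + 1))) ↔
      RModEq (2 * π) (2 * ∑ i ∈ Finset.range n, (-1 : ℝ) ^ i * φ (i : ZMod n)) 0) ∧
    (∀ α : ZMod n → ℝ,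
      (∀ i : ZMod n, RModEq (2 * π) (α i - φ i) (φ i - α (i + 1))) →
      ∀ β : ZMod n → ℝ,
        ((∀ i : ZMod n, RModEq (2 * π) (β i - φ i) (φ i - β (i + 1))) ↔
          ∃ c : ℝ, ∀ i : ZMod n,
            RModEq (2 * π) (β i) (α i + (-1 : ℝ) ^ i.val * c))) := by
  haveI : NeZero n := ⟨hpos.ne'⟩
  have hn2 : 2 ≤ n := by
    rcases hn with ⟨m, hm⟩; omega
  haveI : Fact (1 < n) := ⟨hn2⟩
  have hvi : ∀ i : ZMod n, ((i.val : ℕ) : ZMod n) = i := fun i =>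
    ZMod.natCast_rightInverse i
  have hpar : ∀ i : ZMod n, ((-1 : ℝ)) ^ (i + 1).val = -((-1 : ℝ) ^ i.val) := by
    intro i
    have h1 : (i + 1).val = (i.val + 1) % n := by
      rw [ZMod.val_add, ZMod.val_one]
    have h2 : (i + 1).val % 2 = (i.val + 1) % 2 := by
      rw [h1, Nat.mod_mod_of_dvd _ hn.two_dvd]
    calc ((-1 : ℝ)) ^ (i + 1).val = (-1) ^ (i.val + 1) := neg_one_pow_congr' h2
      _ = -((-1 : ℝ) ^ i.val) := by rw [pow_succ]; ring
  constructor
  · constructor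
    · -- forward direction: existence implies the congruence
      rintro ⟨α, hα⟩
      choose m hm using hα
      set S := ∑ i ∈ Finset.range n, (-1 : ℝ) ^ i * φ (i : ZMod n) with hS
      set F : ℕ → ℝ := fun k => (-1 : ℝ) ^ k * α (k : ZMod n) with hF
      have key : ∑ k ∈ Finset.range n,
          (-1 : ℝ) ^ k * ((α (k : ZMod n) - φ (k : ZMod n))
            - (φ (k : ZMod n) - α ((k : ZMod n) + 1)))
          = (∑ k ∈ Finset.range n, (-1 : ℝ) ^ k * (m (k : ZMod n) : ℝ)) * (2 * π) := by
        rw [Finset.sum_mul]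
        exact Finset.sum_congr rfl fun k _ => by rw [hm]; ring
      have e1 : ∀ k : ℕ, (-1 : ℝ) ^ k * α ((k : ZMod n) + 1) = -F (k + 1) := by
        intro k
        simp only [hF]
        push_cast
        rw [pow_succ]; ring
      have tele : ∑ k ∈ Finset.range n, F (k + 1) = ∑ k ∈ Finset.range n, F k := by
        have h0 : ∑ k ∈ Finset.range (n + 1), F k
            = (∑ k ∈ Finset.range n, F (k + 1)) + F 0 := Finset.sum_range_succ' F n
        have h1 : ∑ k ∈ Finset.range (n + 1), F k
            = (∑ k ∈ Finset.range n, F k) + F n := Finset.sum_range_succ F n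
        have h2 : F n = F 0 := by
          simp only [hF, ZMod.natCast_self, Nat.cast_zero, hn.neg_one_pow, pow_zero]
        linarith [h0, h1, h2]
      have expand : ∑ k ∈ Finset.range n,
          (-1 : ℝ) ^ k * ((α (k : ZMod n) - φ (k : ZMod n))
            - (φ (k : ZMod n) - α ((k : ZMod n) + 1)))
          = (∑ k ∈ Finset.range n, F k) - (∑ k ∈ Finset.range n, F (k + 1)) - 2 * S := by
        rw [hS, Finset.mul_sum, ← Finset.sum_sub_distrib, ← Finset.sum_sub_distrib]
        refine Finset.sum_congr rfl fun k _ => ?_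
        simp only [hF]
        push_cast
        ring
      refine ⟨-(∑ k ∈ Finset.range n, (-1 : ℤ) ^ k * m (k : ZMod n)), ?_⟩
      push_cast
      nlinarith [key, expand, tele]
    · -- backward direction: construct a solution
      rintro ⟨M, hM⟩
      refine ⟨fun i => gseq n φ i.val, fun i => ?_⟩
      have hk : i.val < n := ZMod.val_lt i
      have hi : ((i.val : ℕ) : ZMod n) = i := hvi i
      have hg : gseq n φ (i.val + 1) = 2 * φ i - gseq n φ i.val := by
        rw [← hi]; simp [gseq]
      rcases eq_or_lt_of_le (Nat.succ_le_of_lt hk) with he | hlt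
      · -- wrap-around case : i.val + 1 = n
        have he' : i.val + 1 = n := he
        have h1 : i + 1 = 0 := by
          rw [← hi, ← Nat.cast_one, ← Nat.cast_add, he', ZMod.natCast_self]
        rw [he'] at hg
        have hs : gseq n φ n
            = -2 * ∑ j ∈ Finset.range n, (-1 : ℝ) ^ j * φ (j : ZMod n) := by
          have := gseq_spec n φ n
          rwa [hn.neg_one_pow, one_mul] at this
        refine ⟨M, ?_⟩
        show gseq n φ i.val - φ i - (φ i - gseq n φ (i + 1).val) = (M : ℝ) * (2 * π)
        rw [h1, ZMod.val_zero, show gseq n φ 0 = 0 from rfl]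
        linear_combination hM + hg - hs
      · -- interior case : i.val + 1 < n
        have he' : i.val + 1 < n := hlt
        have h1 : (i + 1).val = i.val + 1 := by
          have h2 : i + 1 = ((i.val + 1 : ℕ) : ZMod n) := by
            rw [Nat.cast_add, Nat.cast_one, hi]
          rw [h2, ZMod.val_cast_of_lt he']
        refine ⟨0, ?_⟩
        show gseq n φ i.val - φ i - (φ i - gseq n φ (i + 1).val) = ((0 : ℤ) : ℝ) * (2 * π)
        rw [h1, hg]
        push_cast
        ring
  · -- second part : structure of the solution set
    intro α hα β
    constructor
    · -- solutions differ by alternating constant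
      intro hβ
      refine ⟨β 0 - α 0, ?_⟩
      have claim : ∀ k : ℕ, ∃ d : ℤ,
          β (k : ZMod n) - (α (k : ZMod n) + (-1 : ℝ) ^ k * (β 0 - α 0)) = d * (2 * π) := by
        intro k
        induction k with
        | zero => exact ⟨0, by push_cast; ring⟩
        | succ k ih =>
          obtain ⟨d, hd⟩ := ih
          obtain ⟨ma, hma⟩ := hα (k : ZMod n)
          obtain ⟨mb, hmb⟩ := hβ (k : ZMod n)
          refine ⟨mb - ma - d, ?_⟩
          push_cast
          linear_combination hmb - hma - hd
      intro i
      obtain ⟨d, hd⟩ := claim i.val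
      rw [hvi i] at hd
      exact ⟨d, hd⟩
    · -- alternating shifts are solutions
      rintro ⟨c, hc⟩ i
      obtain ⟨d1, hd1⟩ := hc i
      obtain ⟨d2, hd2⟩ := hc (i + 1)
      obtain ⟨m0, hm0⟩ := hα i
      refine ⟨d1 + d2 + m0, ?_⟩
      rw [hpar i] at hd2
      push_cast
      linear_combination hd1 + hd2 + hm0
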